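/- Let $T$ be a bounded operator on a separable Banach space $X$, $X_0$ a dense subset of $X$, and $S : X_0 \to X_0$ a map such that for each $x \in X_0$, the series $\sum_{n \ge 0} T^n x$ and $\sum_{n \ge 0} S^n x$ converge unconditionally and $T S x = x$. Then $T$ has a dense set of periodic points, i.e., the set $\{y \in X : \exists p \ge 1, T^p y = y\}$ is dense in $X$. -/

import Mathlib

open Filter Topology
set_option maxHeartbeats 1000000

/-- Chaoticity criterion (periodic part): if `∑ Tⁿx` and `∑ Sⁿx` converge unconditionally and
`TSx = x` on a dense set `X₀`, then the periodic points of `T` are dense. -/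
theorem stmt11 {X : Type*} [NormedAddCommGroup X] [NormedSpace ℂ X] [CompleteSpace X]
    [TopologicalSpace.SeparableSpace X]
    (T : X →L[ℂ] X) (X₀ : Set X) (hdense : Dense X₀)
    (S : X → X) (hS : ∀ x ∈ X₀, S x ∈ X₀)
    (hT : ∀ x ∈ X₀, Summable fun n : ℕ => (T ^ n) x)
    (hSsum : ∀ x ∈ X₀, Summable fun n : ℕ => S^[n] x)
    (hTS : ∀ x ∈ X₀, T (S x) = x) :
    Dense {y : X | ∃ p : ℕ, 1 ≤ p ∧ (T ^ p) y = y} := by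
  rw [Metric.dense_iff]
  intro x r hr
  obtain ⟨x₀, hx₀b, hx₀⟩ := Metric.dense_iff.mp hdense x (r/2) (by linarith)
  rw [Metric.mem_ball] at hx₀b
  -- S iterates stay in X₀
  have hmem : ∀ n : ℕ, S^[n] x₀ ∈ X₀ := by
    intro n
    induction n with
    | zero => exact hx₀
    | succ n ih => rw [Function.iterate_succ_apply']; exact hS _ ih
  -- key inverse relation
  have hTC : ∀ m n : ℕ, (T ^ m) (S^[m + n] x₀) = S^[n] x₀ := by
    intro m
    induction m with
    | zero => intro n; simp
    | succ m ih =>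
      intro n
      have h1 : m + 1 + n = (m + n) + 1 := by omega
      rw [h1, Function.iterate_succ_apply', pow_succ, ContinuousLinearMap.mul_apply,
        hTS _ (hmem _), ih]
  -- vanishing tails
  have hr4 : (0:ℝ) < r/4 := by linarith
  obtain ⟨s₁, hs₁⟩ := (hT x₀ hx₀).vanishing (Metric.ball_mem_nhds (0:X) hr4)
  obtain ⟨s₂, hs₂⟩ := (hSsum x₀ hx₀).vanishing (Metric.ball_mem_nhds (0:X) hr4)
  set p : ℕ := (s₁ ∪ s₂).sup id + 1 with hp_def
  have hp : 1 ≤ p := Nat.le_add_left 1 _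
  have hppos : 0 < p := hp
  have hpgt : ∀ m ∈ s₁ ∪ s₂, m < p := by
    intro m hm
    have := Finset.le_sup (f := id) hm
    simpa [hp_def] using Nat.lt_succ_of_le this
  have hinj : Function.Injective (fun k : ℕ => k * p) := fun a b hab =>
    Nat.eq_of_mul_eq_mul_right hppos hab
  have hinj1 : Function.Injective (fun k : ℕ => (k + 1) * p) := by
    intro a b hab
    have := hinj hab
    omega
  -- the summable tail families
  have sumA : Summable (fun k : ℕ => (T ^ ((k + 1) * p)) x₀) :=
    (hT x₀ hx₀).comp_injective hinj1
  have sumB : Summable (fun k : ℕ => S^[(k + 1) * p] x₀) :=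
    (hSsum x₀ hx₀).comp_injective hinj1
  have sumB0 : Summable (fun k : ℕ => S^[k * p] x₀) :=
    (hSsum x₀ hx₀).comp_injective hinj
  set A : X := ∑' k : ℕ, (T ^ ((k + 1) * p)) x₀ with hA
  set B : X := ∑' k : ℕ, S^[(k + 1) * p] x₀ with hB
  set y : X := x₀ + A + B with hy
  -- periodicity
  have hTpA : (T ^ p) A = ∑' k : ℕ, (T ^ ((k + 2) * p)) x₀ := by
    rw [hA, (T ^ p).map_tsum sumA]
    congr 1
    funext k
    rw [← ContinuousLinearMap.mul_apply, ← pow_add]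
    congr 2
    ring
  have hTpB : (T ^ p) B = ∑' k : ℕ, S^[k * p] x₀ := by
    rw [hB, (T ^ p).map_tsum sumB]
    congr 1
    funext k
    have h2 : (k + 1) * p = p + k * p := by ring
    rw [h2, hTC p (k * p)]
  have eA : A = (T ^ p) x₀ + ∑' k : ℕ, (T ^ ((k + 2) * p)) x₀ := by
    rw [hA, Summable.tsum_eq_zero_add sumA]
    norm_num
  have eB : (∑' k : ℕ, S^[k * p] x₀) = x₀ + B := by
    rw [Summable.tsum_eq_zero_add sumB0]
    norm_num
    rw [hB]
  have hper : (T ^ p) y = y := by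
    rw [hy, map_add, map_add, hTpA, hTpB, eB, eA]
    abel
  -- norm estimates
  have hdisj : ∀ t : Finset ℕ, Disjoint (t.image (fun k => (k + 1) * p)) (s₁ ∪ s₂) := by
    intro t
    rw [Finset.disjoint_left]
    intro m hm hm2
    obtain ⟨k, _, rfl⟩ := Finset.mem_image.mp hm
    have h3 := hpgt _ hm2
    have : p ≤ (k + 1) * p := Nat.le_mul_of_pos_left p (by omega)
    omega
  have hAle : ‖A‖ ≤ r/4 := by
    refine le_of_tendsto' (f := fun n : ℕ => ‖∑ k ∈ Finset.range n, (T ^ ((k + 1) * p)) x₀‖)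
      (sumA.hasSum.tendsto_sum_nat.norm) ?_
    intro n
    have heq : ∑ k ∈ Finset.range n, (T ^ ((k + 1) * p)) x₀
        = ∑ m ∈ (Finset.range n).image (fun k => (k + 1) * p), (T ^ m) x₀ := by
      rw [Finset.sum_image (fun a _ b _ h => hinj1 h)]
    have := hs₁ _ ((hdisj (Finset.range n)).mono_right Finset.subset_union_left)
    rw [Metric.mem_ball, dist_zero_right] at this
    simpa only [heq] using this.le
  have hBle : ‖B‖ ≤ r/4 := by
    refine le_of_tendsto' (f := fun n : ℕ => ‖∑ k ∈ Finset.range n, S^[(k + 1) * p] x₀‖)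
      (sumB.hasSum.tendsto_sum_nat.norm) ?_
    intro n
    have heq : ∑ k ∈ Finset.range n, S^[(k + 1) * p] x₀
        = ∑ m ∈ (Finset.range n).image (fun k => (k + 1) * p), S^[m] x₀ := by
      rw [Finset.sum_image (fun a _ b _ h => hinj1 h)]
    have := hs₂ _ ((hdisj (Finset.range n)).mono_right Finset.subset_union_right)
    rw [Metric.mem_ball, dist_zero_right] at this
    simpa only [heq] using this.le
  refine ⟨y, Metric.mem_ball.mpr ?_, ⟨p, hp, hper⟩⟩
  have hyx₀ : dist y x₀ ≤ r/2 := by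
    rw [dist_eq_norm, hy]
    have : x₀ + A + B - x₀ = A + B := by abel
    rw [this]
    calc ‖A + B‖ ≤ ‖A‖ + ‖B‖ := norm_add_le _ _
      _ ≤ r/4 + r/4 := add_le_add hAle hBle
      _ = r/2 := by ring
  calc dist y x ≤ dist y x₀ + dist x₀ x := dist_triangle _ _ _
    _ < r/2 + r/2 := by
        exact add_lt_add_of_le_of_lt hyx₀ hx₀b
    _ = r := by ring
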